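/- If I is a finite index set, the unary predicates P_i (i ∈ I) are pairwise disjoint, each structure A_i (with universe P_i) in an at most countable relational language is either finite or ω-categorical, and the disjoint union structure A_P = ⋃_{i∈I} A_i expanded by the predicates P_i is infinite, then the theory Th(A_P) is ω-categorical. -/

import Mathlib

open FirstOrder Language Cardinal

set_option autoImplicit false

/-- The induced structure on a subset of the universe of a structure in a relational language. -/
def subStructure (L : FirstOrder.Language.{0,0}) [L.IsRelational] (M : Type) [L.Structure M]
    (s : Set M) : L.Structure s where
  funMap := fun f _ => isEmptyElim f
  RelMap := fun r x => Structure.RelMap r (fun k => (x k : M))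

/-- The complete theory of the induced structure on a subset. -/
noncomputable def partTheory (L : FirstOrder.Language.{0,0}) [L.IsRelational] (M : Type)
    [L.Structure M] (s : Set M) : L.Theory :=
  @FirstOrder.Language.completeTheory L s (subStructure L M s)

/-- The number of models of `T` of cardinality `κ`, up to isomorphism. -/
noncomputable def numModels (L : FirstOrder.Language.{0,0}) (T : L.Theory) (κ : Cardinal) :
    Cardinal :=
  #(Quot (fun (N N' : {N : FirstOrder.Language.Theory.ModelType.{0,0,0} T // #N.1 = κ}) => Nonempty (N.1 ≃[L] N'.1)))

/-- A theory is ω-categorical if it has exactly one countable model up to isomorphism. -/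
def OmegaCategorical (L : FirstOrder.Language.{0,0}) (T : L.Theory) : Prop :=
  numModels L T ℵ₀ = 1

namespace Aux


variable {L : FirstOrder.Language.{0,0}} [L.IsRelational] {M : Type} [L.Structure M]

lemma eq_fin_one (x : Fin 1 → M) : ![x 0] = x := funext fun i => by fin_cases i; rfl

/-- Relativization of a bounded formula to the unary predicate `p`. -/
noncomputable def relativize (p : L.Relations 1) :
    ∀ {n}, L.BoundedFormula Empty n → L.BoundedFormula Empty n
  | _, BoundedFormula.falsum => BoundedFormula.falsum
  | _, BoundedFormula.equal t₁ t₂ => BoundedFormula.equal t₁ t₂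
  | _, BoundedFormula.rel r ts => BoundedFormula.rel r ts
  | _, BoundedFormula.imp φ ψ => (relativize p φ).imp (relativize p ψ)
  | n, BoundedFormula.all φ =>
      BoundedFormula.all ((p.boundedFormula ![Term.var (Sum.inr (Fin.last n))]).imp
        (relativize p φ))

lemma term_realize_coe (s : Set M) {n : ℕ} (t : L.Term (Empty ⊕ Fin n)) (v : Empty ⊕ Fin n → s) :
    ((@Term.realize L s (subStructure L M s) _ v t : s) : M)
      = Term.realize (fun k => ((v k : s) : M)) t := by
  cases t with
  | var => rfl
  | func f _ => exact isEmptyElim f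

lemma coe_snoc (s : Set M) {n : ℕ} (xs : Fin n → s) (b : s) :
    (fun k => (((Fin.snoc xs b : Fin (n+1) → s) k : s) : M)) = Fin.snoc (fun k => ((xs k : s) : M)) (b : M) := by
  funext k
  cases k using Fin.lastCases with
  | last => simp
  | cast i => simp

lemma realize_relativize (p : L.Relations 1) :
    ∀ {n : ℕ} (φ : L.BoundedFormula Empty n)
      (v : Empty → {a : M | Structure.RelMap p ![a]})
      (xs : Fin n → {a : M | Structure.RelMap p ![a]}),
    @BoundedFormula.Realize L _ (subStructure L M {a : M | Structure.RelMap p ![a]}) _ _ φ v xs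
      ↔ (relativize p φ).Realize (fun e => isEmptyElim e) (fun k => ((xs k : M)))
  | _, BoundedFormula.falsum, v, xs => by
      simp [relativize, BoundedFormula.Realize]
  | _, BoundedFormula.equal t₁ t₂, v, xs => by
      letI := subStructure L M {a : M | Structure.RelMap p ![a]}
      have hu : (Sum.elim (fun e : Empty => isEmptyElim e) fun k => ((xs k : M)))
          = fun k => ((Sum.elim v xs k : {a : M | Structure.RelMap p ![a]}) : M) :=
        funext (fun k => by cases k with
          | inl e => exact isEmptyElim e
          | inr k => rfl)
      simp only [relativize, BoundedFormula.Realize, hu, ← term_realize_coe]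
      exact Subtype.coe_injective.eq_iff.symm
  | _, BoundedFormula.rel r ts, v, xs => by
      letI := subStructure L M {a : M | Structure.RelMap p ![a]}
      have hu : (Sum.elim (fun e : Empty => isEmptyElim e) fun k => ((xs k : M)))
          = fun k => ((Sum.elim v xs k : {a : M | Structure.RelMap p ![a]}) : M) :=
        funext (fun k => by cases k with
          | inl e => exact isEmptyElim e
          | inr k => rfl)
      show Structure.RelMap r (fun k => ((Term.realize (Sum.elim v xs) (ts k) : _) : M)) ↔ _
      simp only [relativize, BoundedFormula.Realize, hu, ← term_realize_coe]
  | n, BoundedFormula.imp φ ψ, v, xs => by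
      simp only [relativize, BoundedFormula.Realize]
      rw [realize_relativize p φ v xs, realize_relativize p ψ v xs]
  | n, BoundedFormula.all φ, v, xs => by
      letI := subStructure L M {a : M | Structure.RelMap p ![a]}
      simp only [relativize, BoundedFormula.realize_all, BoundedFormula.realize_imp]
      constructor
      · intro h a ha
        have ha' : a ∈ {a : M | Structure.RelMap p ![a]} := by
          have := ha
          simp only [BoundedFormula.realize_rel, Term.realize_var, Sum.elim_inr] at this
          show Structure.RelMap p ![a]
          rw [show (![a] : Fin 1 → M)
            = fun i => Term.realize (L := L) (Sum.elim (fun e : Empty => isEmptyElim e)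
               (Fin.snoc (fun k => ((xs k : M))) a))
              (![Term.var (Sum.inr (Fin.last n))] i) from funext fun i => by
                fin_cases i; simp]
          exact this
        have := (realize_relativize p φ v (Fin.snoc xs ⟨a, ha'⟩)).1 (h ⟨a, ha'⟩)
        rw [coe_snoc] at this
        exact this
      · intro h b
        have hb : BoundedFormula.Realize ((p.boundedFormula (α := Empty) ![Term.var (Sum.inr (Fin.last n))]))
            (fun e => isEmptyElim e) (Fin.snoc (fun k => ((xs k : M))) (b : M)) := by
          have hb2 : Structure.RelMap p ![(b : M)] := b.2
          simp only [BoundedFormula.realize_rel, Term.realize_var]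
          rw [show (fun i => Term.realize (L := L)
              (Sum.elim (fun e : Empty => isEmptyElim e)
                (Fin.snoc (fun k => ((xs k : M))) (b : M)))
              (![Term.var (Sum.inr (Fin.last n))] i))
            = ![(b : M)] from funext fun i => by fin_cases i; simp]
          exact hb2
        have := h (b : M) hb
        rw [realize_relativize p φ v (Fin.snoc xs b), coe_snoc]
        exact this



variable {L : FirstOrder.Language.{0,0}} [L.IsRelational]

noncomputable def distinctForm (n : ℕ) : L.BoundedFormula Empty n :=
  BoundedFormula.iInf (fun (ij : Fin n × Fin n) =>
    if ij.1 = ij.2 then ⊤ else ∼((Term.var (Sum.inr ij.1) : L.Term (Empty ⊕ Fin n)) =' Term.var (Sum.inr ij.2)))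

noncomputable def exhaustForm (n : ℕ) : L.BoundedFormula Empty n :=
  BoundedFormula.all (BoundedFormula.iSup fun i : Fin n =>
    ((Term.var (Sum.inr (Fin.castSucc i)) : L.Term (Empty ⊕ Fin (n+1))) =' Term.var (Sum.inr (Fin.last n))))

open Classical in
noncomputable def litForm {n m : ℕ} (r : L.Relations m) (t : Fin m → Fin n) (sign : Prop) :
    L.BoundedFormula Empty n :=
  if sign then r.boundedFormula (fun k => Term.var (Sum.inr (t k)))
  else ∼(r.boundedFormula (fun k => Term.var (Sum.inr (t k))))

variable {A : Type} [L.Structure A]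

lemma realize_distinctForm {n : ℕ} {v : Empty → A} {xs : Fin n → A} :
    (distinctForm n (L := L)).Realize v xs ↔ Function.Injective xs := by
  simp only [distinctForm, BoundedFormula.realize_iInf, Finset.mem_univ, true_implies]
  constructor
  · intro H i j hij
    by_contra hne
    have := H (i, j)
    rw [if_neg hne] at this
    simp only [BoundedFormula.realize_not, BoundedFormula.realize_bdEqual, Term.realize_var,
      Sum.elim_inr] at this
    exact this hij
  · intro H ij
    by_cases hij : ij.1 = ij.2
    · rw [if_pos hij]; exact BoundedFormula.realize_top.2 trivial
    · rw [if_neg hij]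
      simp only [BoundedFormula.realize_not, BoundedFormula.realize_bdEqual, Term.realize_var,
        Sum.elim_inr]
      exact fun hEq => hij (H hEq)

lemma realize_exhaustForm {n : ℕ} {v : Empty → A} {xs : Fin n → A} :
    (exhaustForm n (L := L)).Realize v xs ↔ Function.Surjective xs := by
  simp only [exhaustForm, BoundedFormula.realize_all, BoundedFormula.realize_iSup,
    Finset.mem_univ, true_and, BoundedFormula.realize_bdEqual, Term.realize_var, Sum.elim_inr,
    Fin.snoc_castSucc, Fin.snoc_last]
  exact ⟨fun H b => H b, fun H b => H b⟩

lemma realize_litForm {n m : ℕ} {r : L.Relations m} {t : Fin m → Fin n} {sign : Prop}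
    {v : Empty → A} {xs : Fin n → A} :
    (litForm r t sign).Realize v xs ↔ (Structure.RelMap r (fun k => xs (t k)) ↔ sign) := by
  by_cases hs : sign
  · rw [litForm, if_pos hs]
    simp [BoundedFormula.realize_rel, hs]
  · rw [litForm, if_neg hs]
    simp [BoundedFormula.realize_not, BoundedFormula.realize_rel, hs]

theorem finIso {A B : Type} [L.Structure A] [L.Structure B] (hA : Finite A)
    (h : A ≅[L] B) : Nonempty (A ≃[L] B) := by
  classical
  set n := Nat.card A with hn
  let e : Fin n ≃ A := (Finite.equivFin A).symm
  -- B is finite of the same size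
  have hA0 : A ⊨ ((distinctForm n ⊓ exhaustForm n).exs (L := L)) := by
    rw [Sentence.Realize, BoundedFormula.realize_exs]
    exact ⟨fun i => e i, by
      rw [BoundedFormula.realize_inf, realize_distinctForm, realize_exhaustForm]
      exact ⟨fun i j hij => e.injective hij, fun b => ⟨e.symm b, e.apply_symm_apply b⟩⟩⟩
  have hB0 : B ⊨ ((distinctForm n ⊓ exhaustForm n).exs (L := L)) :=
    (h.realize_sentence _).1 hA0
  rw [Sentence.Realize, BoundedFormula.realize_exs] at hB0
  obtain ⟨ys0, hys0⟩ := hB0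
  rw [BoundedFormula.realize_inf, realize_distinctForm, realize_exhaustForm] at hys0
  haveI : Finite B := Finite.of_surjective ys0 hys0.2
  by_cases hgood : ∃ g : Fin n → B, Function.Bijective g ∧
      ∀ (m : ℕ) (r : L.Relations m) (t : Fin m → Fin n),
        (Structure.RelMap r (fun k => e (t k)) ↔ Structure.RelMap r (g ∘ t))
  · obtain ⟨g, hbij, hg⟩ := hgood
    refine ⟨⟨e.symm.trans (Equiv.ofBijective g hbij), ?_, ?_⟩⟩
    · intro _ f; exact isEmptyElim f
    · intro m r x
      have := hg m r (fun k => e.symm (x k))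
      simpa [Function.comp_def] using this.symm
  · exfalso
    push_neg at hgood
    letI : Fintype {g : Fin n → B // Function.Bijective g} := Fintype.ofFinite _
    -- witness data for each bijection
    have hw : ∀ g : {g : Fin n → B // Function.Bijective g},
        ∃ (m : ℕ) (r : L.Relations m) (t : Fin m → Fin n),
          ¬(Structure.RelMap r (fun k => e (t k)) ↔ Structure.RelMap r (g.1 ∘ t)) := by
      intro g
      obtain ⟨m, r, t, hmrt⟩ := hgood g.1 g.2
      exact ⟨m, r, t, by tauto⟩
    choose wm wr wt hwspec using hw
    let sign : {g : Fin n → B // Function.Bijective g} → Prop :=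
      fun g => Structure.RelMap (wr g) (fun k => e (wt g k))
    let φ : L.Sentence :=
      (distinctForm n ⊓ exhaustForm n ⊓
        BoundedFormula.iInf (fun g => litForm (wr g) (wt g) (sign g))).exs
    have hAφ : A ⊨ φ := by
      rw [Sentence.Realize, BoundedFormula.realize_exs]
      refine ⟨fun i => e i, ?_⟩
      rw [BoundedFormula.realize_inf, BoundedFormula.realize_inf, realize_distinctForm,
        realize_exhaustForm, BoundedFormula.realize_iInf]
      refine ⟨⟨fun i j hij => e.injective hij, fun b => ⟨e.symm b, e.apply_symm_apply b⟩⟩, ?_⟩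
      intro g
      rw [realize_litForm]
    have hBφ : B ⊨ φ := (h.realize_sentence _).1 hAφ
    rw [Sentence.Realize, BoundedFormula.realize_exs] at hBφ
    obtain ⟨ys, hys⟩ := hBφ
    rw [BoundedFormula.realize_inf, BoundedFormula.realize_inf, realize_distinctForm,
      realize_exhaustForm, BoundedFormula.realize_iInf] at hys
    obtain ⟨⟨hinj, hsurj⟩, hlits⟩ := hys
    set g : {g : Fin n → B // Function.Bijective g} := ⟨ys, hinj, hsurj⟩ with hgdef
    have hlit := hlits g
    rw [realize_litForm] at hlit
    exact hwspec g (Iff.trans (Iff.of_eq rfl) hlit.symm)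



variable {L : FirstOrder.Language.{0,0}} [L.IsRelational]

lemma realize_pred1 {M : Type} [L.Structure M] (p : L.Relations 1) {n : ℕ}
    (t : L.Term (Empty ⊕ Fin n)) (v : Empty → M) (xs : Fin n → M) :
    (p.boundedFormula ![t]).Realize v xs
      ↔ Structure.RelMap p ![Term.realize (Sum.elim v xs) t] := by
  rw [BoundedFormula.realize_rel]
  have : (fun k => Term.realize (Sum.elim v xs) (![t] k))
      = ![Term.realize (Sum.elim v xs) t] := funext fun k => by fin_cases k <;> rfl
  rw [this]

noncomputable def disjSent (p q : L.Relations 1) : L.Sentence :=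
  BoundedFormula.all (∼(p.boundedFormula (α := Empty) ![Term.var (Sum.inr 0)]
    ⊓ q.boundedFormula ![Term.var (Sum.inr 0)]))

lemma realize_disjSent {M : Type} [L.Structure M] {p q : L.Relations 1} :
    M ⊨ disjSent p q
      ↔ ∀ a : M, ¬(Structure.RelMap p ![a] ∧ Structure.RelMap q ![a]) := by
  rw [Sentence.Realize, disjSent]
  simp only [Formula.Realize, BoundedFormula.realize_all, BoundedFormula.realize_not,
    BoundedFormula.realize_inf, realize_pred1, Term.realize_var, Sum.elim_inr]
  constructor
  · intro H a
    have := H a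
    simpa [Fin.snoc] using this
  · intro H a
    simpa [Fin.snoc] using H a

noncomputable def coverSent {I : Type} [Fintype I] (P : I → L.Relations 1) : L.Sentence :=
  BoundedFormula.all (BoundedFormula.iSup fun i : I =>
    (P i).boundedFormula (α := Empty) ![Term.var (Sum.inr 0)])

lemma realize_coverSent {M : Type} [L.Structure M] {I : Type} [Fintype I]
    {P : I → L.Relations 1} :
    M ⊨ coverSent P ↔ ∀ a : M, ∃ i : I, Structure.RelMap (P i) ![a] := by
  rw [Sentence.Realize, coverSent]
  simp only [Formula.Realize, BoundedFormula.realize_all, BoundedFormula.realize_iSup,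
    Finset.mem_univ, true_and, realize_pred1, Term.realize_var, Sum.elim_inr]
  constructor
  · intro H a
    obtain ⟨i, hi⟩ := H a
    exact ⟨i, by simpa [Fin.snoc] using hi⟩
  · intro H a
    obtain ⟨i, hi⟩ := H a
    exact ⟨i, by simpa [Fin.snoc] using hi⟩

noncomputable def nocrossSent {I : Type} [Fintype I] (P : I → L.Relations 1)
    {m : ℕ} (r : L.Relations m) : L.Sentence :=
  ((r.boundedFormula (α := Empty) (fun k => Term.var (Sum.inr k))).imp
    (BoundedFormula.iSup fun i : I =>
      BoundedFormula.iInf fun k : Fin m =>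
        (P i).boundedFormula ![Term.var (Sum.inr k)])).alls

lemma fun_realize_fin1 {M : Type} [L.Structure M] {n : ℕ} (k : Fin n) (v : Empty → M)
    (xs : Fin n → M) :
    (fun i => Term.realize (L := L) (Sum.elim v xs) (![Term.var (Sum.inr k)] i)) = ![xs k] :=
  funext fun j => by fin_cases j; rfl

lemma realize_nocrossSent {M : Type} [L.Structure M] {I : Type} [Fintype I]
    {P : I → L.Relations 1} {m : ℕ} {r : L.Relations m} :
    M ⊨ nocrossSent P r ↔ ∀ x : Fin m → M, Structure.RelMap r x →
      ∃ i : I, ∀ k : Fin m, Structure.RelMap (P i) ![x k] := by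
  rw [Sentence.Realize, nocrossSent]
  simp only [BoundedFormula.realize_alls, BoundedFormula.realize_imp,
    BoundedFormula.realize_rel, BoundedFormula.realize_iSup, BoundedFormula.realize_iInf,
    Finset.mem_univ, true_and, true_implies, fun_realize_fin1, Term.realize_var, Sum.elim_inr]



variable {L : FirstOrder.Language.{0,0}} [L.IsRelational]

theorem glue {I : Type} (P : I → L.Relations 1) (N N' : Type)
    [L.Structure N] [L.Structure N']
    (hdisjN : ∀ i j : I, i ≠ j → ∀ a : N,
      ¬(Structure.RelMap (P i) ![a] ∧ Structure.RelMap (P j) ![a]))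
    (hcovN : ∀ a : N, ∃ i : I, Structure.RelMap (P i) ![a])
    (hnocrossN : ∀ (m : ℕ) (r : L.Relations m) (x : Fin m → N),
      Structure.RelMap r x → ∃ i : I, ∀ k, Structure.RelMap (P i) ![x k])
    (hdisjN' : ∀ i j : I, i ≠ j → ∀ a : N',
      ¬(Structure.RelMap (P i) ![a] ∧ Structure.RelMap (P j) ![a]))
    (hcovN' : ∀ a : N', ∃ i : I, Structure.RelMap (P i) ![a])
    (hnocrossN' : ∀ (m : ℕ) (r : L.Relations m) (x : Fin m → N'),
      Structure.RelMap r x → ∃ i : I, ∀ k, Structure.RelMap (P i) ![x k])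
    (hg : ∀ i : I, Nonempty
      (@Language.Equiv L {a : N | Structure.RelMap (P i) ![a]}
        {a : N' | Structure.RelMap (P i) ![a]}
        (subStructure L N {a : N | Structure.RelMap (P i) ![a]})
        (subStructure L N' {a : N' | Structure.RelMap (P i) ![a]}))) :
    Nonempty (N ≃[L] N') := by
  classical
  let g := fun i => (hg i).some
  let idx : N → I := fun a => Classical.choose (hcovN a)
  have hidx : ∀ a : N, Structure.RelMap (P (idx a)) ![a] :=
    fun a => Classical.choose_spec (hcovN a)
  -- uniqueness of index
  have huniq : ∀ (i j : I) (a : N), Structure.RelMap (P i) ![a] →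
      Structure.RelMap (P j) ![a] → i = j := by
    intro i j a hi hj
    by_contra hne
    exact hdisjN i j hne a ⟨hi, hj⟩
  have huniq' : ∀ (i j : I) (a : N'), Structure.RelMap (P i) ![a] →
      Structure.RelMap (P j) ![a] → i = j := by
    intro i j a hi hj
    by_contra hne
    exact hdisjN' i j hne a ⟨hi, hj⟩
  let f : N → N' := fun a => (g (idx a) ⟨a, hidx a⟩ : N')
  -- f lands in the right part
  have hmem : ∀ a : N, Structure.RelMap (P (idx a)) ![(f a : N')] :=
    fun a => (g (idx a) ⟨a, hidx a⟩).2
  -- independence of proofs / index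
  have hgcongr : ∀ (i j : I) (hij : i = j) (a : N) (hai : Structure.RelMap (P i) ![a])
      (haj : Structure.RelMap (P j) ![a]),
      ((g i ⟨a, hai⟩ : {a : N' | Structure.RelMap (P i) ![a]}) : N')
        = ((g j ⟨a, haj⟩ : {a : N' | Structure.RelMap (P j) ![a]}) : N') := by
    intro i j hij; subst hij; intro a _ _; rfl
  have hfeq : ∀ (i : I) (a : N) (ha : Structure.RelMap (P i) ![a]),
      f a = ((g i ⟨a, ha⟩ : {a : N' | Structure.RelMap (P i) ![a]}) : N') := by
    intro i a ha
    exact hgcongr (idx a) i (huniq _ _ a (hidx a) ha) a (hidx a) ha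
  have hinj : Function.Injective f := by
    intro a b hab
    letI := subStructure L N {a : N | Structure.RelMap (P (idx b)) ![a]}
    letI := subStructure L N' {a : N' | Structure.RelMap (P (idx b)) ![a]}
    have hi : idx a = idx b := by
      refine huniq' (idx a) (idx b) (f a) (hmem a) ?_
      rw [hab]; exact hmem b
    have ha' : Structure.RelMap (P (idx b)) ![a] := hi ▸ hidx a
    have : ((g (idx b)) ⟨a, ha'⟩ : N') = ((g (idx b)) ⟨b, hidx b⟩ : N') := by
      rw [← hfeq (idx b) a ha']; exact hab
    have := (g (idx b)).toEquiv.injective (Subtype.coe_injective this)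
    exact congrArg Subtype.val this
  have hsurj : Function.Surjective f := by
    intro b'
    obtain ⟨i, hb'⟩ := hcovN' b'
    letI := subStructure L N {a : N | Structure.RelMap (P i) ![a]}
    letI := subStructure L N' {a : N' | Structure.RelMap (P i) ![a]}
    let x := (g i).toEquiv.symm ⟨b', hb'⟩
    refine ⟨(x : N), ?_⟩
    rw [hfeq i (x : N) x.2]
    have : (⟨(x : N), x.2⟩ : {a : N | Structure.RelMap (P i) ![a]}) = x := Subtype.ext rfl
    rw [this]
    exact congrArg Subtype.val ((g i).toEquiv.apply_symm_apply ⟨b', hb'⟩)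
  refine ⟨⟨Equiv.ofBijective f ⟨hinj, hsurj⟩, ?_, ?_⟩⟩
  · intro _ fn; exact isEmptyElim fn
  · intro m r x
    show Structure.RelMap r (f ∘ x) ↔ Structure.RelMap r x
    constructor
    · intro hx'
      obtain ⟨j, hj⟩ := hnocrossN' m r (f ∘ x) hx'
      letI := subStructure L N {a : N | Structure.RelMap (P j) ![a]}
      letI := subStructure L N' {a : N' | Structure.RelMap (P j) ![a]}
      have hxj : ∀ k, Structure.RelMap (P j) ![x k] := by
        intro k
        have : idx (x k) = j := huniq' _ _ (f (x k)) (hmem (x k)) (hj k)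
        exact this ▸ hidx (x k)
      have h1 : (f ∘ x) = fun k => ((g j ⟨x k, hxj k⟩ : _) : N') :=
        funext fun k => hfeq j (x k) (hxj k)
      rw [h1] at hx'
      exact ((g j).map_rel' r (fun k => ⟨x k, hxj k⟩)).1 hx'
    · intro hx
      obtain ⟨j, hxj⟩ := hnocrossN m r x hx
      letI := subStructure L N {a : N | Structure.RelMap (P j) ![a]}
      letI := subStructure L N' {a : N' | Structure.RelMap (P j) ![a]}
      have key := ((g j).map_rel' r (fun k =>
        (⟨x k, hxj k⟩ : {a : N | Structure.RelMap (P j) ![a]}))).2 hx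
      show Structure.RelMap r (f ∘ x)
      rw [show f ∘ x = fun k => ((g j ⟨x k, hxj k⟩ : _) : N') from
        funext fun k => hfeq j (x k) (hxj k)]
      exact key



variable {L : FirstOrder.Language.{0,0}}

lemma model_completeTheory_self (M : Type) [L.Structure M] : M ⊨ L.completeTheory M :=
  ⟨fun _ hφ => hφ⟩

lemma elemEquiv_of_model {M N : Type} [L.Structure M] [L.Structure N]
    (h : N ⊨ L.completeTheory M) : M ≅[L] N := by
  rw [elementarilyEquivalent_iff]
  intro φ
  constructor
  · exact fun hM => h.realize_of_mem φ hM
  · intro hN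
    by_contra hM
    have h1 : M ⊨ φ.not := (Sentence.realize_not M).2 hM
    have h2 : N ⊨ φ.not := h.realize_of_mem φ.not h1
    exact (Sentence.realize_not N).1 h2 hN

lemma model_of_elemEquiv {M N : Type} [L.Structure M] [L.Structure N]
    (h : M ≅[L] N) : N ⊨ L.completeTheory M := by
  refine ⟨fun φ hφ => ?_⟩
  exact (h.realize_sentence φ).1 hφ

/-- Extraction of isomorphism from ω-categoricity. -/
lemma iso_of_omegaCat {T : L.Theory} (h : OmegaCategorical L T) (B B' : Type)
    [L.Structure B] [L.Structure B'] [Nonempty B] [Nonempty B']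
    (hB : B ⊨ T) (hB' : B' ⊨ T) (cB : #B = ℵ₀) (cB' : #B' = ℵ₀) :
    Nonempty (B ≃[L] B') := by
  letI := hB; letI := hB'
  let rel := fun (X X' : {N : Theory.ModelType.{0,0,0} T // #N.1 = ℵ₀}) =>
    Nonempty (X.1 ≃[L] X'.1)
  have hsub : Subsingleton (Quot rel) :=
    (Cardinal.eq_one_iff_unique.1 h).1
  let X : {N : Theory.ModelType.{0,0,0} T // #N.1 = ℵ₀} := ⟨Theory.ModelType.of T B, cB⟩
  let X' : {N : Theory.ModelType.{0,0,0} T // #N.1 = ℵ₀} := ⟨Theory.ModelType.of T B', cB'⟩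
  have heq : Quot.mk rel X = Quot.mk rel X' := Subsingleton.elim _ _
  have hgen := Quot.eqvGen_exact heq
  have key : ∀ Y Y' : {N : Theory.ModelType.{0,0,0} T // #N.1 = ℵ₀},
      Relation.EqvGen rel Y Y' → Nonempty ((Y.1 : Type) ≃[L] (Y'.1 : Type)) := by
    intro Y Y' hYY'
    induction hYY' with
    | rel _ _ hr => exact hr
    | refl Y => exact ⟨Language.Equiv.refl L _⟩
    | symm _ _ _ ih => exact ⟨Language.Equiv.symm ih.some⟩
    | trans _ _ _ _ _ ih1 ih2 => exact ⟨Language.Equiv.comp ih2.some ih1.some⟩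
  exact key X X' hgen


section Rel
variable {L : FirstOrder.Language.{0,0}} [L.IsRelational]

lemma sentence_relativize {M : Type} [L.Structure M] (p : L.Relations 1) (φ : L.Sentence) :
    @Sentence.Realize L _ (subStructure L M {a : M | Structure.RelMap p ![a]}) φ
      ↔ M ⊨ relativize p φ := by
  letI := subStructure L M {a : M | Structure.RelMap p ![a]}
  have h := realize_relativize (M := M) p φ default default
  have e1 : (fun e : Empty => (isEmptyElim e : M)) = default := Subsingleton.elim _ _
  have e2 : (fun k : Fin 0 =>
      (((default : Fin 0 → {a : M | Structure.RelMap p ![a]}) k : _) : M)) = default :=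
    Subsingleton.elim _ _
  rw [e1, e2] at h
  exact h

lemma part_elemEquiv {M N : Type} [L.Structure M] [L.Structure N] (p : L.Relations 1)
    (h : M ≅[L] N) :
    @ElementarilyEquivalent L {a : M | Structure.RelMap p ![a]}
      {a : N | Structure.RelMap p ![a]}
      (subStructure L M {a : M | Structure.RelMap p ![a]})
      (subStructure L N {a : N | Structure.RelMap p ![a]}) := by
  letI := subStructure L M {a : M | Structure.RelMap p ![a]}
  letI := subStructure L N {a : N | Structure.RelMap p ![a]}
  rw [elementarilyEquivalent_iff]
  intro φ
  rw [sentence_relativize, sentence_relativize]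
  exact h.realize_sentence _

end Rel
end Aux

/-- if `I` is finite, the unary predicates `P i` are pairwise disjoint and cover
the infinite structure `M` (which is the disjoint `P`-combination of the structures induced on
the sets `P i`, with no relations linking distinct parts), the language is at most countable,
and each part is finite or ω-categorical, then `Th(M)` is ω-categorical. -/
theorem stmt0 (L : FirstOrder.Language.{0,0}) [L.IsRelational] (M : Type) [L.Structure M]
    (I : Type) (P : I → L.Relations 1)
    (hfin : Finite I)
    (hcard : L.card ≤ ℵ₀)
    (hdisj : ∀ i j : I, i ≠ j → ∀ a : M,
      ¬ (Structure.RelMap (P i) ![a] ∧ Structure.RelMap (P j) ![a]))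
    (hne : ∀ i : I, ∃ a : M, Structure.RelMap (P i) ![a])
    (hcover : ∀ a : M, ∃ i : I, Structure.RelMap (P i) ![a])
    (hnocross : ∀ (n : ℕ) (r : L.Relations n) (x : Fin n → M),
      Structure.RelMap r x → ∃ i : I, ∀ k : Fin n, Structure.RelMap (P i) ![x k])
    (hinf : Infinite M)
    (hparts : ∀ i : I,
      Set.Finite {a : M | Structure.RelMap (P i) ![a]} ∨
        OmegaCategorical L (partTheory L M {a : M | Structure.RelMap (P i) ![a]})) :
    OmegaCategorical L (L.completeTheory M) := by
  classical
  haveI := hfin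
  haveI := hinf
  letI : Fintype I := Fintype.ofFinite I
  refine Cardinal.eq_one_iff_unique.2 ⟨⟨?_⟩, ?_⟩
  · -- subsingleton: any two countable models are isomorphic
    intro q q'
    induction q using Quot.ind with | _ Y => ?_
    induction q' using Quot.ind with | _ Y' => ?_
    apply Quot.sound
    have hYM : M ≅[L] (Y.1 : Type) := Aux.elemEquiv_of_model Y.1.is_model
    have hY'M : M ≅[L] (Y'.1 : Type) := Aux.elemEquiv_of_model Y'.1.is_model
    have hdisjY : ∀ i j : I, i ≠ j → ∀ a : (Y.1 : Type),
        ¬(Structure.RelMap (P i) ![a] ∧ Structure.RelMap (P j) ![a]) :=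
      fun i j hij => Aux.realize_disjSent.1
        ((hYM.realize_sentence _).1 (Aux.realize_disjSent.2 (hdisj i j hij)))
    have hdisjY' : ∀ i j : I, i ≠ j → ∀ a : (Y'.1 : Type),
        ¬(Structure.RelMap (P i) ![a] ∧ Structure.RelMap (P j) ![a]) :=
      fun i j hij => Aux.realize_disjSent.1
        ((hY'M.realize_sentence _).1 (Aux.realize_disjSent.2 (hdisj i j hij)))
    have hcovY : ∀ a : (Y.1 : Type), ∃ i : I, Structure.RelMap (P i) ![a] :=
      Aux.realize_coverSent.1 ((hYM.realize_sentence _).1 (Aux.realize_coverSent.2 hcover))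
    have hcovY' : ∀ a : (Y'.1 : Type), ∃ i : I, Structure.RelMap (P i) ![a] :=
      Aux.realize_coverSent.1 ((hY'M.realize_sentence _).1 (Aux.realize_coverSent.2 hcover))
    have hnoxY : ∀ (m : ℕ) (r : L.Relations m) (x : Fin m → (Y.1 : Type)),
        Structure.RelMap r x → ∃ i : I, ∀ k, Structure.RelMap (P i) ![x k] :=
      fun m r => Aux.realize_nocrossSent.1
        ((hYM.realize_sentence _).1 (Aux.realize_nocrossSent.2 (fun x hx => hnocross m r x hx)))
    have hnoxY' : ∀ (m : ℕ) (r : L.Relations m) (x : Fin m → (Y'.1 : Type)),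
        Structure.RelMap r x → ∃ i : I, ∀ k, Structure.RelMap (P i) ![x k] :=
      fun m r => Aux.realize_nocrossSent.1
        ((hY'M.realize_sentence _).1 (Aux.realize_nocrossSent.2 (fun x hx => hnocross m r x hx)))
    have hpartiso : ∀ i : I, Nonempty
        (@Language.Equiv L {a : (Y.1 : Type) | Structure.RelMap (P i) ![a]}
          {a : (Y'.1 : Type) | Structure.RelMap (P i) ![a]}
          (subStructure L (Y.1 : Type) {a : (Y.1 : Type) | Structure.RelMap (P i) ![a]})
          (subStructure L (Y'.1 : Type) {a : (Y'.1 : Type) | Structure.RelMap (P i) ![a]})) := by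
      intro i
      letI SA := subStructure L M {a : M | Structure.RelMap (P i) ![a]}
      letI SB := subStructure L (Y.1 : Type) {a : (Y.1 : Type) | Structure.RelMap (P i) ![a]}
      letI SB' := subStructure L (Y'.1 : Type) {a : (Y'.1 : Type) | Structure.RelMap (P i) ![a]}
      have hAB := Aux.part_elemEquiv (P i) hYM
      have hAB' := Aux.part_elemEquiv (P i) hY'M
      haveI hAne : Nonempty {a : M | Structure.RelMap (P i) ![a]} := by
        obtain ⟨a, ha⟩ := hne i
        exact ⟨⟨a, ha⟩⟩
      by_cases hfinA : Finite {a : M | Structure.RelMap (P i) ![a]}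
      · obtain ⟨e1⟩ := Aux.finIso hfinA hAB
        obtain ⟨e2⟩ := Aux.finIso hfinA hAB'
        exact ⟨e2.comp e1.symm⟩
      · have hcat : OmegaCategorical L (partTheory L M {a : M | Structure.RelMap (P i) ![a]}) :=
          (hparts i).resolve_left (fun hf => hfinA hf.to_subtype)
        haveI : Infinite {a : M | Structure.RelMap (P i) ![a]} := not_finite_iff_infinite.1 hfinA
        haveI : Infinite {a : (Y.1 : Type) | Structure.RelMap (P i) ![a]} := hAB.infinite
        haveI : Infinite {a : (Y'.1 : Type) | Structure.RelMap (P i) ![a]} := hAB'.infinite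
        haveI : Nonempty {a : (Y.1 : Type) | Structure.RelMap (P i) ![a]} := hAB.nonempty
        haveI : Nonempty {a : (Y'.1 : Type) | Structure.RelMap (P i) ![a]} := hAB'.nonempty
        have cB : #{a : (Y.1 : Type) | Structure.RelMap (P i) ![a]} = ℵ₀ :=
          le_antisymm ((Cardinal.mk_subtype_le _).trans (le_of_eq Y.2)) (Cardinal.aleph0_le_mk _)
        have cB' : #{a : (Y'.1 : Type) | Structure.RelMap (P i) ![a]} = ℵ₀ :=
          le_antisymm ((Cardinal.mk_subtype_le _).trans (le_of_eq Y'.2)) (Cardinal.aleph0_le_mk _)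
        have hBmod : {a : (Y.1 : Type) | Structure.RelMap (P i) ![a]}
            ⊨ partTheory L M {a : M | Structure.RelMap (P i) ![a]} :=
          Aux.model_of_elemEquiv hAB
        have hB'mod : {a : (Y'.1 : Type) | Structure.RelMap (P i) ![a]}
            ⊨ partTheory L M {a : M | Structure.RelMap (P i) ![a]} :=
          Aux.model_of_elemEquiv hAB'
        exact Aux.iso_of_omegaCat hcat _ _ hBmod hB'mod cB cB'
    exact Aux.glue P (Y.1 : Type) (Y'.1 : Type) hdisjY hcovY hnoxY hdisjY' hcovY' hnoxY' hpartiso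
  · -- nonempty: a countable model exists (downward Löwenheim–Skolem)
    obtain ⟨S, -, hS⟩ := exists_elementarySubstructure_card_eq L (∅ : Set M) (Cardinal.aleph0 : Cardinal.{0}) le_rfl
      (by simp) (by simpa using hcard) (by simpa using Cardinal.aleph0_le_mk M)
    have hScard : #S = ℵ₀ := by simpa using hS
    haveI : Nonempty S := Cardinal.mk_ne_zero_iff.1 (by rw [hScard]; exact Cardinal.aleph0_ne_zero)
    haveI hSmod : (S : Type) ⊨ L.completeTheory M :=
      ⟨fun φ hφ => (S.realize_sentence φ).2 hφ⟩
    exact ⟨Quot.mk _ ⟨Theory.ModelType.of _ S, hScard⟩⟩
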